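/- arXiv:2105.12099 — 2 statements merged into one kernel-verified Lean document; each statement's English description precedes it below -/
import Mathlib

section
/- Let G be a finite additive abelian group, let d₁, d₂ : G → ℝ and g : G → ℝ be arbitrary functions, let α_f, α_s > 0, and let p, q ∈ (1, ∞) satisfy 1/p + 1/q = 1. Define the gradient image (Dg)(r) = ((d₁⋆g)(r), (d₂⋆g)(r)) ∈ ℝ², the Hessian image (Hg)(r), a real symmetric 2×2 matrix with (i,j) entry (dᵢ⋆dⱼ⋆g)(r), and for u : G → ℝ² the symmetrized Jacobian image E(u)(r), a real symmetric 2×2 matrix with (i,j) entry ½((dⱼ⋆uᵢ)(r) + (dᵢ⋆uⱼ)(r)). For a symmetric-matrix image N : G → Sym₂(ℝ), define the vector image (N⋆d̃)(r) ∈ ℝ² whose i-th component is (Nᵢ₁⋆d̃₁)(r) + (Nᵢ₂⋆d̃₂)(r). Then the infimum over all u : G → ℝ² of α_f·Σ_{r∈G} ‖(Dg)(r) − u(r)‖₂ + α_s·Σ_{r∈G} ‖E(u)(r)‖_{S(p)} equals the supremum of Σ_{r∈G} trace(N(r)·(Hg)(r)) over all symmetric-matrix images N : G → Sym₂(ℝ)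 satisfying ‖N(r)‖_{S(q)} ≤ α_s for every r ∈ G and ‖(N⋆d̃)(r)‖₂ ≤ α_f for every r ∈ G. -/
open scoped BigOperators
open Matrix

namespace GHSN

variable {G : Type*} [AddCommGroup G] [Fintype G]

/-- Convolution of two functions on a finite abelian group. -/
noncomputable def conv (f g : G → ℝ) : G → ℝ := fun r => ∑ s, f s * g (r - s)

/-- The flipped filter `f̃(r) = f(−r)`. -/
def flipF (f : G → ℝ) : G → ℝ := fun r => f (-r)

/-- The Euclidean norm on `ℝ²`. -/
noncomputable def euclNorm2 (v : Fin 2 → ℝ) : ℝ := Real.sqrt (v 0 ^ 2 + v 1 ^ 2)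

/-- The gradient image `(Dg)(r) = ((d₁⋆g)(r), (d₂⋆g)(r))`. -/
noncomputable def grad (d₁ d₂ g : G → ℝ) (r : G) : Fin 2 → ℝ :=
  ![conv d₁ g r, conv d₂ g r]

/-- The Hessian image: `(Hg)(r)` has `(i,j)` entry `(dᵢ⋆dⱼ⋆g)(r)`. -/
noncomputable def hess (d₁ d₂ g : G → ℝ) (r : G) : Matrix (Fin 2) (Fin 2) ℝ :=
  !![conv d₁ (conv d₁ g) r, conv d₁ (conv d₂ g) r;
     conv d₂ (conv d₁ g) r, conv d₂ (conv d₂ g) r]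

/-- The symmetrized Jacobian image of a vector image `u : G → ℝ²`: a symmetric
2×2 matrix with `(i,j)` entry `½((dⱼ⋆uᵢ)(r) + (dᵢ⋆uⱼ)(r))`. -/
noncomputable def symJac (d₁ d₂ : G → ℝ) (u : G → Fin 2 → ℝ) (r : G) :
    Matrix (Fin 2) (Fin 2) ℝ :=
  !![(conv d₁ (fun s => u s 0) r + conv d₁ (fun s => u s 0) r) / 2,
     (conv d₂ (fun s => u s 0) r + conv d₁ (fun s => u s 1) r) / 2;
     (conv d₁ (fun s => u s 1) r + conv d₂ (fun s => u s 0) r) / 2,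
     (conv d₂ (fun s => u s 1) r + conv d₂ (fun s => u s 1) r) / 2]

lemma symJac_isHermitian (d₁ d₂ : G → ℝ) (u : G → Fin 2 → ℝ) (r : G) :
    (symJac d₁ d₂ u r).IsHermitian :=
  Matrix.ext fun i j => by
    fin_cases i <;> fin_cases j <;>
      simp [symJac, Matrix.conjTranspose_apply] <;> ring

/-- The vector image `(N⋆d̃)(r)` with `i`-th component
`(Nᵢ₁⋆d̃₁)(r) + (Nᵢ₂⋆d̃₂)(r)`. -/
noncomputable def divN (d₁ d₂ : G → ℝ) (N : G → Matrix (Fin 2) (Fin 2) ℝ) (r : G) :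
    Fin 2 → ℝ :=
  fun i => conv (fun s => N s i 0) (flipF d₁) r + conv (fun s => N s i 1) (flipF d₂) r

/-- `(|x|^t + |y|^t)^(1/t)`. -/
noncomputable def phi2 (t x y : ℝ) : ℝ := (|x| ^ t + |y| ^ t) ^ (1/t)

noncomputable def lamP (a b c : ℝ) : ℝ := ((a + c) + Real.sqrt ((a - c)^2 + 4*b^2)) / 2
noncomputable def lamM (a b c : ℝ) : ℝ := ((a + c) - Real.sqrt ((a - c)^2 + 4*b^2)) / 2

/-- Schatten-type `t`-functional of the symmetric matrix `!![a,b;b,c]`. -/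
noncomputable def schS (t a b c : ℝ) : ℝ := phi2 t (lamP a b c) (lamM a b c)

lemma phi2_nonneg (t x y : ℝ) : 0 ≤ phi2 t x y := Real.rpow_nonneg (by positivity) _

lemma phi2_comm (t x y : ℝ) : phi2 t x y = phi2 t y x := by simp [phi2, add_comm]

lemma phi2_abs (t x y : ℝ) : phi2 t |x| |y| = phi2 t x y := by simp [phi2, abs_abs]

lemma schS_nonneg (t a b c : ℝ) : 0 ≤ schS t a b c := phi2_nonneg _ _ _

lemma phi2_zero {t : ℝ} (ht : t ≠ 0) : phi2 t 0 0 = 0 := by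
  simp [phi2, Real.zero_rpow ht, one_div, Real.zero_rpow (inv_ne_zero ht)]

lemma lamP_add_lamM (a b c : ℝ) : lamP a b c + lamM a b c = a + c := by
  simp [lamP, lamM]; ring

lemma lamP_mul_lamM (a b c : ℝ) : lamP a b c * lamM a b c = a*c - b^2 := by
  have h : Real.sqrt ((a - c)^2 + 4*b^2) ^ 2 = (a - c)^2 + 4*b^2 :=
    Real.sq_sqrt (by positivity)
  simp only [lamP, lamM]
  nlinarith [h]

lemma pair_determined {x y x' y' : ℝ} (hs : x + y = x' + y') (hm : x * y = x' * y') :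
    (x = x' ∧ y = y') ∨ (x = y' ∧ y = x') := by
  have h : (x - x') * (x - y') = 0 := by linear_combination x * hs - hm
  rcases mul_eq_zero.1 h with h | h
  · exact Or.inl ⟨by linarith, by linarith⟩
  · exact Or.inr ⟨by linarith, by linarith⟩

/-- If `(x,y)` has the same sum and "det" as the symmetric matrix `!![a,b;b,c]`, then
`schS t a b c = phi2 t x y`. -/
lemma schS_pair {x y a b c : ℝ} (t : ℝ) (hs : x + y = a + c) (hm : x * y = a*c - b^2) :
    schS t a b c = phi2 t x y := by
  rcases pair_determined ((lamP_add_lamM a b c).trans hs.symm)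
      ((lamP_mul_lamM a b c).trans hm.symm) with ⟨h1, h2⟩ | ⟨h1, h2⟩
  · rw [schS, h1, h2]
  · rw [schS, h1, h2, phi2_comm]

lemma schS_zero {t : ℝ} (ht : t ≠ 0) : schS t 0 0 0 = 0 := by
  have : schS t 0 0 0 = phi2 t 0 0 := schS_pair t (by norm_num) (by norm_num)
  rw [this, phi2_zero ht]

/-- Cauchy-Schwarz for `euclNorm2`. -/
lemma eucl_CS (v w : Fin 2 → ℝ) : v 0 * w 0 + v 1 * w 1 ≤ euclNorm2 v * euclNorm2 w := by
  have h1 : euclNorm2 v * euclNorm2 w = Real.sqrt ((v 0^2 + v 1^2) * (w 0^2 + w 1^2)) := by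
    rw [euclNorm2, euclNorm2, ← Real.sqrt_mul (by positivity)]
  rw [h1]
  calc v 0 * w 0 + v 1 * w 1 ≤ |v 0 * w 0 + v 1 * w 1| := le_abs_self _
    _ = Real.sqrt ((v 0 * w 0 + v 1 * w 1)^2) := (Real.sqrt_sq_eq_abs _).symm
    _ ≤ _ := Real.sqrt_le_sqrt (by nlinarith [sq_nonneg (v 0 * w 1 - v 1 * w 0)])

lemma eucl_nonneg (v : Fin 2 → ℝ) : 0 ≤ euclNorm2 v := Real.sqrt_nonneg _

/-- Two-term Hölder. -/
lemma holder_pair {p q : ℝ} (hpq : Real.HolderConjugate p q) (x y u v : ℝ) :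
    x*u + y*v ≤ phi2 p x y * phi2 q u v := by
  have := Real.inner_le_Lp_mul_Lq (Finset.univ : Finset (Fin 2)) ![x, y] ![u, v] hpq
  simpa [Fin.sum_univ_two, phi2] using this

/-- Von Neumann trace inequality for symmetric 2×2 matrices, combined with Hölder. -/
lemma vonNeumann {p q : ℝ} (hpq : Real.HolderConjugate p q) (a b c a' b' c' : ℝ) :
    a*a' + 2*(b*b') + c*c' ≤ schS p a b c * schS q a' b' c' := by
  set D := (a - c)^2 + 4*b^2 with hD
  set D' := (a' - c')^2 + 4*b'^2 with hD'
  have hsD : Real.sqrt D ^ 2 = D := Real.sq_sqrt (by positivity)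
  have hsD' : Real.sqrt D' ^ 2 = D' := Real.sq_sqrt (by positivity)
  have key : (a - c)*(a' - c') + 4*(b*b') ≤ Real.sqrt D * Real.sqrt D' := by
    calc (a - c)*(a' - c') + 4*(b*b') ≤ |(a - c)*(a' - c') + 4*(b*b')| := le_abs_self _
      _ = Real.sqrt (((a - c)*(a' - c') + 4*(b*b'))^2) := (Real.sqrt_sq_eq_abs _).symm
      _ ≤ Real.sqrt (D * D') := Real.sqrt_le_sqrt (by
            nlinarith [sq_nonneg ((a - c) * (2*b') - 2*b*(a' - c'))])
      _ = Real.sqrt D * Real.sqrt D' := Real.sqrt_mul (by positivity) _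
  have step1 : a*a' + 2*(b*b') + c*c' ≤
      lamP a b c * lamP a' b' c' + lamM a b c * lamM a' b' c' := by
    simp only [lamP, lamM]
    nlinarith [key]
  have step2 : lamP a b c * lamP a' b' c' + lamM a b c * lamM a' b' c' ≤
      phi2 p (lamP a b c) (lamM a b c) * phi2 q (lamP a' b' c') (lamM a' b' c') := by
    calc lamP a b c * lamP a' b' c' + lamM a b c * lamM a' b' c'
        ≤ |lamP a b c| * |lamP a' b' c'| + |lamM a b c| * |lamM a' b' c'| := by
          have := abs_mul (lamP a b c) (lamP a' b' c')
          have := abs_mul (lamM a b c) (lamM a' b' c')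
          have h1 := le_abs_self (lamP a b c * lamP a' b' c')
          have h2 := le_abs_self (lamM a b c * lamM a' b' c')
          rw [abs_mul] at h1 h2
          linarith
      _ ≤ phi2 p |lamP a b c| |lamM a b c| * phi2 q |lamP a' b' c'| |lamM a' b' c'| :=
          holder_pair hpq _ _ _ _
      _ = _ := by rw [phi2_abs, phi2_abs]
  exact step1.trans step2

lemma conj_facts {p q : ℝ} (hp : 1 < p) (hpq : 1 / p + 1 / q = 1) :
    Real.HolderConjugate p q := ⟨by rw [inv_one, ← one_div, ← one_div]; exact hpq, by linarith, by
      have h1 : 1 / p < 1 := (div_lt_one (by linarith)).2 hp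
      have h2 : 0 < 1 / q := by linarith
      exact one_div_pos.1 h2⟩

/-- sign helper -/
noncomputable def sg (x : ℝ) : ℝ := if x < 0 then -1 else 1

lemma sg_mul_self (x : ℝ) : sg x * x = |x| := by
  rcases lt_or_ge x 0 with h | h
  · simp [sg, h, abs_of_neg h]
  · simp [sg, not_lt.2 h, abs_of_nonneg h]

lemma abs_sg (x : ℝ) : |sg x| = 1 := by
  rcases lt_or_ge x 0 with h | h
  · simp [sg, h]
  · simp [sg, not_lt.2 h]

/-- Attainment of the Schatten dual pairing bound, at the scalar level. -/
lemma exists_dual_abc {p q : ℝ} (hpq : Real.HolderConjugate p q) {αs : ℝ} (hαs : 0 ≤ αs)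
    (a b c : ℝ) : ∃ a' b' c' : ℝ,
      schS q a' b' c' ≤ αs ∧ a*a' + 2*(b*b') + c*c' = αs * schS p a b c := by
  have hp0 : (p : ℝ) ≠ 0 := hpq.pos.ne'
  have hq0 : (q : ℝ) ≠ 0 := hpq.symm.pos.ne'
  set L := lamP a b c with hL
  set l := lamM a b c with hl
  have hsum : L + l = a + c := lamP_add_lamM a b c
  have hprod : L * l = a*c - b^2 := lamP_mul_lamM a b c
  set S : ℝ := |L| ^ p + |l| ^ p with hS
  have hS0 : 0 ≤ S := by positivity
  set T : ℝ := S ^ (1/p) with hT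
  have hTschS : T = schS p a b c := rfl
  rcases eq_or_lt_of_le (Real.rpow_nonneg hS0 (1/p) : (0:ℝ) ≤ T) with hT0 | hT0
  · -- T = 0 : take the zero dual
    refine ⟨0, 0, 0, by simpa [schS_zero hq0] using hαs, ?_⟩
    have hT0' : T = 0 := by rw [hT]; exact hT0.symm
    rw [← hTschS, hT0']; ring
  -- T > 0
  have hTp : T ^ p = S := by
    rw [hT, ← Real.rpow_mul hS0, one_div, inv_mul_cancel₀ hp0, Real.rpow_one]
  set C : ℝ := αs * T ^ (1-p) with hC
  have hC0 : 0 ≤ C := by positivity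
  set μP : ℝ := C * |L| ^ (p-1) * sg L with hμP
  set μM : ℝ := C * |l| ^ (p-1) * sg l with hμM
  have habs : ∀ x : ℝ, |x| ^ (p-1) * |x| = |x| ^ p := by
    intro x
    have h := Real.rpow_add' (abs_nonneg x) (by simp [hp0] : p-1+1 ≠ 0)
    rw [Real.rpow_one] at h
    rw [← h]
    norm_num
  -- pairing value
  have hpair : L * μP + l * μM = αs * T := by
    have h1 : L * μP = C * |L| ^ p := by
      rw [hμP]
      calc L * (C * |L| ^ (p-1) * sg L) = C * (|L| ^ (p-1) * (sg L * L)) := by ring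
        _ = C * (|L| ^ (p-1) * |L|) := by rw [sg_mul_self]
        _ = C * |L| ^ p := by rw [habs]
    have h2 : l * μM = C * |l| ^ p := by
      rw [hμM]
      calc l * (C * |l| ^ (p-1) * sg l) = C * (|l| ^ (p-1) * (sg l * l)) := by ring
        _ = C * (|l| ^ (p-1) * |l|) := by rw [sg_mul_self]
        _ = C * |l| ^ p := by rw [habs]
    have hTS : T ^ (1-p) * S = T := by
      rw [← hTp, ← Real.rpow_add hT0]
      have h9 : (1-p) + p = 1 := by ring
      rw [h9, Real.rpow_one]
    rw [h1, h2, ← mul_add, ← hS, hC]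
    calc αs * T ^ (1-p) * S = αs * (T ^ (1-p) * S) := by ring
      _ = αs * T := by rw [hTS]
  -- dual feasibility value
  have habsμP : |μP| = C * |L| ^ (p-1) := by
    rw [hμP, abs_mul, abs_mul, abs_sg, mul_one, abs_of_nonneg hC0,
      abs_of_nonneg (Real.rpow_nonneg (abs_nonneg _) _)]
  have habsμM : |μM| = C * |l| ^ (p-1) := by
    rw [hμM, abs_mul, abs_mul, abs_sg, mul_one, abs_of_nonneg hC0,
      abs_of_nonneg (Real.rpow_nonneg (abs_nonneg _) _)]
  have hfeas : phi2 q μP μM = αs := by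
    have hrq : ∀ x : ℝ, (|x| ^ (p-1)) ^ q = |x| ^ p := by
      intro x
      rw [← Real.rpow_mul (abs_nonneg x), hpq.sub_one_mul_conj]
    have hsumq : |μP| ^ q + |μM| ^ q = C ^ q * S := by
      rw [habsμP, habsμM, Real.mul_rpow hC0 (Real.rpow_nonneg (abs_nonneg _) _),
        Real.mul_rpow hC0 (Real.rpow_nonneg (abs_nonneg _) _), hrq, hrq, hS]
      ring
    have hpq2 : p / q = p - 1 := by
      have := hpq.sub_one_mul_conj
      field_simp
      linarith [this]
    rw [phi2, hsumq, ← hTp, Real.mul_rpow (by positivity) (by positivity),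
      ← Real.rpow_mul hC0, ← Real.rpow_mul (le_of_lt hT0), mul_one_div, mul_one_div,
      div_self hq0, Real.rpow_one, hpq2, hC, mul_assoc, ← Real.rpow_add hT0]
    norm_num
  clear_value S T C μP μM
  clear hS hT hC hμP hμM hTp habs habsμP habsμM hS0 hT0 hC0 hαs
  -- construct the dual matrix
  rcases eq_or_ne L l with hLl | hLl
  · -- degenerate case: a = c, b = 0
    have hD : Real.sqrt ((a - c)^2 + 4*b^2) = 0 := by
      have : L - l = Real.sqrt ((a - c)^2 + 4*b^2) := by rw [hL, hl, lamP, lamM]; ring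
      rw [← this, hLl, sub_self]
    have hD0 : (a - c)^2 + 4*b^2 ≤ 0 := Real.sqrt_eq_zero'.1 hD
    have hac : a = c := by nlinarith [sq_nonneg (a - c), sq_nonneg b]
    have hb : b = 0 := by nlinarith [sq_nonneg (a - c), sq_nonneg b]
    have haL : a = L := by
      rw [hL, lamP, hD, ← hac]; ring
    refine ⟨μP, 0, μM, ?_, ?_⟩
    · have : schS q μP 0 μM = phi2 q μP μM :=
        schS_pair q rfl (by ring)
      rw [this, hfeas]
    · have hcl : c = l := by
        rw [hl, lamM, hD, ← hac]; ring
      rw [← hTschS, ← hpair, haL, hcl, hb]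
      ring
  · -- generic case
    set β : ℝ := (μP - μM) / (L - l) with hβ
    set α : ℝ := μM - β * l with hα
    have hLl' : L - l ≠ 0 := sub_ne_zero.2 hLl
    have hβL : α + β * L = μP := by
      rw [hα, hβ]; field_simp; ring
    have hβl : α + β * l = μM := by rw [hα]; ring
    refine ⟨α + β * a, β * b, α + β * c, ?_, ?_⟩
    · have hsq : schS q (α + β * a) (β * b) (α + β * c) = phi2 q μP μM := by
        apply schS_pair q
        · rw [← hβL, ← hβl]; linear_combination β * hsum
        · rw [← hβL, ← hβl]; linear_combination (α * β) * hsum + (β^2) * hprod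
      rw [hsq, hfeas]
    · have hA2 : a^2 + 2*b^2 + c^2 = L^2 + l^2 := by linear_combination (-(L+l+a+c)) * hsum + 2 * hprod
      have expand : a*(α + β * a) + 2*(b*(β * b)) + c*(α + β * c)
          = α * (L + l) + β * (L^2 + l^2) := by
        linear_combination (-α) * hsum + β * hA2
      rw [expand, ← hTschS, ← hpair, ← hβL, ← hβl]
      ring

/-! ### Euclidean norm lemmas -/

lemma eucl_smul (k : ℝ) (w : Fin 2 → ℝ) : euclNorm2 (fun i => k * w i) = |k| * euclNorm2 w := by
  rw [euclNorm2, euclNorm2, show (k * w 0)^2 + (k * w 1)^2 = k^2 * (w 0^2 + w 1^2) by ring,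
    Real.sqrt_mul (sq_nonneg k), Real.sqrt_sq_eq_abs]

lemma abs_le_eucl (v : Fin 2 → ℝ) (i : Fin 2) : |v i| ≤ euclNorm2 v := by
  rw [euclNorm2, ← Real.sqrt_sq_eq_abs]
  apply Real.sqrt_le_sqrt
  fin_cases i <;> simp <;> nlinarith [sq_nonneg (v 0), sq_nonneg (v 1)]

lemma sq_eucl (v : Fin 2 → ℝ) : euclNorm2 v ^ 2 = v 0 ^ 2 + v 1 ^ 2 :=
  Real.sq_sqrt (by positivity)

lemma exists_dual_eucl {αf : ℝ} (hαf : 0 ≤ αf) (w : Fin 2 → ℝ) :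
    ∃ v : Fin 2 → ℝ, euclNorm2 v ≤ αf ∧ v 0 * w 0 + v 1 * w 1 = αf * euclNorm2 w := by
  rcases eq_or_lt_of_le (eucl_nonneg w) with h0 | h0
  · exact ⟨fun _ => 0, by simpa [euclNorm2] using hαf, by simp [← h0]⟩
  · set n := euclNorm2 w with hn
    refine ⟨fun i => (αf / n) * w i, ?_, ?_⟩
    · rw [eucl_smul, abs_of_nonneg (by positivity), ← hn, div_mul_cancel₀ _ h0.ne']
    · have hsq : w 0 ^ 2 + w 1 ^ 2 = n ^ 2 := (sq_eucl w).symm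
      field_simp
      nlinarith [hsq]

/-! ### Eigenvalue bridge -/

lemma herm_entry {A : Matrix (Fin 2) (Fin 2) ℝ} (hA : A.IsHermitian) : A 1 0 = A 0 1 := by
  have := congrFun (congrFun hA 0) 1
  simpa [Matrix.conjTranspose_apply] using this

lemma eig_sum {A : Matrix (Fin 2) (Fin 2) ℝ} (hA : A.IsHermitian) :
    hA.eigenvalues 0 + hA.eigenvalues 1 = A 0 0 + A 1 1 := by
  have key := congrArg Matrix.trace hA.spectral_theorem
  rw [Unitary.conjStarAlgAut_apply] at key
  rw [Matrix.trace_mul_cycle] at key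
  rw [show (star (hA.eigenvectorUnitary : Matrix (Fin 2) (Fin 2) ℝ)) *
      (hA.eigenvectorUnitary : Matrix (Fin 2) (Fin 2) ℝ) = 1 from
      Matrix.mem_unitaryGroup_iff'.mp hA.eigenvectorUnitary.2, one_mul] at key
  rw [Matrix.trace_fin_two A] at key
  rw [key, Matrix.trace_diagonal, Fin.sum_univ_two]
  simp

lemma eig_prod {A : Matrix (Fin 2) (Fin 2) ℝ} (hA : A.IsHermitian) :
    hA.eigenvalues 0 * hA.eigenvalues 1 = A 0 0 * A 1 1 - A 0 1 ^ 2 := by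
  have key := hA.det_eq_prod_eigenvalues
  rw [Matrix.det_fin_two, Fin.prod_univ_two, herm_entry hA] at key
  have : A 0 0 * A 1 1 - A 0 1 * A 0 1 =
      (hA.eigenvalues 0 : ℝ) * (hA.eigenvalues 1 : ℝ) := key
  rw [← this]; ring

lemma schS_entries {A : Matrix (Fin 2) (Fin 2) ℝ} (hA : A.IsHermitian) (t : ℝ) :
    schS t (A 0 0) (A 0 1) (A 1 1) = phi2 t (hA.eigenvalues 0) (hA.eigenvalues 1) :=
  schS_pair t (eig_sum hA) (eig_prod hA)

/-! ### Convolution lemmas -/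


lemma conv_swap (f h g : G → ℝ) : conv f (conv h g) = conv h (conv f g) := by
  funext r
  simp only [conv, Finset.mul_sum]
  rw [Finset.sum_comm]
  refine Finset.sum_congr rfl fun t _ => Finset.sum_congr rfl fun s _ => ?_
  rw [sub_right_comm]
  ring

lemma sum_conv_mul (a u m : G → ℝ) :
    ∑ r, conv a u r * m r = ∑ t, u t * conv m (flipF a) t := by
  have lhs : ∑ r, conv a u r * m r = ∑ s, ∑ t, a s * u t * m (t + s) := by
    simp only [conv, Finset.sum_mul]
    rw [Finset.sum_comm]
    refine Finset.sum_congr rfl fun s _ => ?_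
    refine Fintype.sum_equiv (Equiv.subRight s) _ _ fun r => ?_
    simp only [Equiv.subRight_apply]
    have h1 : r - s + s = r := by abel
    rw [h1]
  have rhs : ∑ t, u t * conv m (flipF a) t = ∑ t, ∑ s, a s * u t * m (t + s) := by
    simp only [conv, flipF, Finset.mul_sum]
    refine Finset.sum_congr rfl fun t _ => ?_
    refine Fintype.sum_equiv (Equiv.subRight t) _ _ fun s => ?_
    simp only [Equiv.subRight_apply]
    have h1 : t + (s - t) = s := by abel
    rw [neg_sub, h1]
    ring
  rw [lhs, rhs, Finset.sum_comm]

def tr2 (x y : ℝ × ℝ × ℝ) : ℝ := x.1*y.1 + 2*(x.2.1*y.2.1) + x.2.2*y.2.2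

noncomputable def schS3 (t : ℝ) (x : ℝ × ℝ × ℝ) : ℝ := schS t x.1 x.2.1 x.2.2


/-- `abc`-version of the symmetrized Jacobian. -/
noncomputable def Eabc (d₁ d₂ : G → ℝ) (u : G → Fin 2 → ℝ) (r : G) : ℝ × ℝ × ℝ :=
  (conv d₁ (fun s => u s 0) r,
   (conv d₂ (fun s => u s 0) r + conv d₁ (fun s => u s 1) r) / 2,
   conv d₂ (fun s => u s 1) r)

/-- `abc`-version of the divergence `N ⋆ d̃`. -/
noncomputable def dv (d₁ d₂ : G → ℝ) (m : G → ℝ × ℝ × ℝ) (r : G) : Fin 2 → ℝ :=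
  ![conv (fun s => (m s).1) (flipF d₁) r + conv (fun s => (m s).2.1) (flipF d₂) r,
    conv (fun s => (m s).2.1) (flipF d₁) r + conv (fun s => (m s).2.2) (flipF d₂) r]

lemma dv_zero (d₁ d₂ : G → ℝ) (r : G) : dv d₁ d₂ (fun _ => (0,0,0)) r = fun _ => 0 := by
  funext i
  fin_cases i <;> simp [dv, conv]

/-- The fundamental adjoint identity. -/
lemma sum_tr2_E (d₁ d₂ : G → ℝ) (m : G → ℝ × ℝ × ℝ) (u : G → Fin 2 → ℝ) :
    ∑ r, tr2 (m r) (Eabc d₁ d₂ u r)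
      = ∑ r, (u r 0 * dv d₁ d₂ m r 0 + u r 1 * dv d₁ d₂ m r 1) := by
  have e1 := sum_conv_mul d₁ (fun s => u s 0) (fun s => (m s).1)
  have e2 := sum_conv_mul d₂ (fun s => u s 0) (fun s => (m s).2.1)
  have e3 := sum_conv_mul d₁ (fun s => u s 1) (fun s => (m s).2.1)
  have e4 := sum_conv_mul d₂ (fun s => u s 1) (fun s => (m s).2.2)
  have lhs : ∑ r, tr2 (m r) (Eabc d₁ d₂ u r)
      = (∑ r, conv d₁ (fun s => u s 0) r * (m r).1)
        + ((∑ r, conv d₂ (fun s => u s 0) r * (m r).2.1)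
        + ((∑ r, conv d₁ (fun s => u s 1) r * (m r).2.1)
        + (∑ r, conv d₂ (fun s => u s 1) r * (m r).2.2))) := by
    rw [← Finset.sum_add_distrib, ← Finset.sum_add_distrib, ← Finset.sum_add_distrib]
    refine Finset.sum_congr rfl fun r _ => ?_
    simp only [tr2, Eabc]
    ring
  have rhs : ∑ r, (u r 0 * dv d₁ d₂ m r 0 + u r 1 * dv d₁ d₂ m r 1)
      = (∑ r, (fun s => u s 0) r * conv (fun s => (m s).1) (flipF d₁) r)
        + ((∑ r, (fun s => u s 0) r * conv (fun s => (m s).2.1) (flipF d₂) r)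
        + ((∑ r, (fun s => u s 1) r * conv (fun s => (m s).2.1) (flipF d₁) r)
        + (∑ r, (fun s => u s 1) r * conv (fun s => (m s).2.2) (flipF d₂) r))) := by
    rw [← Finset.sum_add_distrib, ← Finset.sum_add_distrib, ← Finset.sum_add_distrib]
    refine Finset.sum_congr rfl fun r _ => ?_
    simp only [dv, Matrix.cons_val_zero, Matrix.cons_val_one, Matrix.head_cons]
    ring
  rw [lhs, rhs, e1, e2, e3, e4]

/-- The `abc` data associated to a Hermitian matrix image. -/
def mOf (N : G → Matrix (Fin 2) (Fin 2) ℝ) (s : G) : ℝ × ℝ × ℝ := (N s 0 0, N s 0 1, N s 1 1)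

lemma dv_mOf (d₁ d₂ : G → ℝ) (N : G → Matrix (Fin 2) (Fin 2) ℝ)
    (hN : ∀ s, (N s).IsHermitian) (r : G) (i : Fin 2) :
    dv d₁ d₂ (mOf N) r i = divN d₁ d₂ N r i := by
  have h10 : (fun s => N s 1 0) = (fun s => N s 0 1) := funext fun s => herm_entry (hN s)
  fin_cases i <;> simp [dv, divN, mOf, h10]

lemma trace_mul_tr2 (N H : Matrix (Fin 2) (Fin 2) ℝ) (hN : N.IsHermitian) :
    (N * H).trace = tr2 (N 0 0, N 0 1, N 1 1) (H 0 0, (H 0 1 + H 1 0)/2, H 1 1) := by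
  rw [Matrix.trace_fin_two]
  simp only [Matrix.mul_apply, Fin.sum_univ_two, tr2]
  rw [herm_entry hN]
  ring

/-- `Eabc` of the gradient gives the Hessian entries. -/
lemma Eabc_grad (d₁ d₂ g : G → ℝ) (r : G) :
    Eabc d₁ d₂ (grad d₁ d₂ g) r
      = (hess d₁ d₂ g r 0 0, (hess d₁ d₂ g r 0 1 + hess d₁ d₂ g r 1 0)/2,
         hess d₁ d₂ g r 1 1) := by
  simp only [Eabc, grad, hess, Matrix.cons_val_zero, Matrix.cons_val_one, Matrix.head_cons,
    Matrix.cons_val', Matrix.empty_val', Matrix.cons_val_fin_one, Matrix.head_fin_const,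
    Matrix.of_apply]
  refine Prod.ext rfl (Prod.ext ?_ rfl)
  show (conv d₂ (fun s => conv d₁ g s) r + conv d₁ (fun s => conv d₂ g s) r) / 2 = _
  rw [show (fun s => conv d₁ g s) = conv d₁ g from rfl,
    show (fun s => conv d₂ g s) = conv d₂ g from rfl, conv_swap d₂ d₁ g]

/-- Total dual objective identity. -/
lemma dual_value (d₁ d₂ g : G → ℝ) (N : G → Matrix (Fin 2) (Fin 2) ℝ)
    (hN : ∀ s, (N s).IsHermitian) :
    ∑ r, (N r * hess d₁ d₂ g r).trace
      = ∑ r, (grad d₁ d₂ g r 0 * dv d₁ d₂ (mOf N) r 0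
            + grad d₁ d₂ g r 1 * dv d₁ d₂ (mOf N) r 1) := by
  rw [← sum_tr2_E]
  refine Finset.sum_congr rfl fun r _ => ?_
  rw [trace_mul_tr2 _ _ (hN r), Eabc_grad, mOf]

/-! ### abs_le_phi and ball bounds -/

lemma abs_le_phi {t : ℝ} (ht : 0 < t) (x y : ℝ) : |x| ≤ phi2 t x y := by
  have h1 : |x| = (|x| ^ t) ^ (1/t) := by
    rw [← Real.rpow_mul (abs_nonneg x), mul_one_div, div_self ht.ne', Real.rpow_one]
  rw [h1, phi2]
  exact Real.rpow_le_rpow (by positivity) (le_add_of_nonneg_right (by positivity)) (by positivity)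

lemma lamM_le_lamP (a b c : ℝ) : lamM a b c ≤ lamP a b c := by
  have := Real.sqrt_nonneg ((a - c)^2 + 4*b^2)
  simp only [lamP, lamM]; linarith

lemma diag_between (a b c : ℝ) :
    lamM a b c ≤ a ∧ a ≤ lamP a b c ∧ lamM a b c ≤ c ∧ c ≤ lamP a b c := by
  set L := lamP a b c with hL
  set l := lamM a b c with hl
  have hsum : L + l = a + c := lamP_add_lamM a b c
  have hprod : L * l = a*c - b^2 := lamP_mul_lamM a b c
  have hle : l ≤ L := lamM_le_lamP a b c
  have ha : (a - L) * (a - l) = -b^2 := by linear_combination (-a) * hsum + hprod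
  have hc : (c - L) * (c - l) = -b^2 := by linear_combination (-c) * hsum + hprod
  have h1 : l ≤ a ∧ a ≤ L := by
    by_contra h
    push_neg at h
    rcases lt_or_ge a l with h2 | h2
    · nlinarith [sq_nonneg b]
    · have h3 := h h2
      nlinarith [sq_nonneg b]
  have h2 : l ≤ c ∧ c ≤ L := by
    by_contra h
    push_neg at h
    rcases lt_or_ge c l with h2 | h2
    · nlinarith [sq_nonneg b]
    · have h3 := h h2
      nlinarith [sq_nonneg b]
  exact ⟨h1.1, h1.2, h2.1, h2.2⟩

/-- Entry bounds from a Schatten bound. -/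
lemma entries_bound {t αs : ℝ} (ht : 0 < t) {a b c : ℝ} (h : schS t a b c ≤ αs) :
    |a| ≤ αs ∧ |b| ≤ 2*αs ∧ |c| ≤ αs := by
  set L := lamP a b c with hL
  set l := lamM a b c with hl
  have hLa : |L| ≤ αs := le_trans (abs_le_phi ht L l) h
  have hla : |l| ≤ αs := by
    refine le_trans ?_ h
    rw [show schS t a b c = phi2 t L l from rfl, phi2_comm]
    exact abs_le_phi ht l L
  obtain ⟨g1, g2, g3, g4⟩ := diag_between a b c
  have hprod : L * l = a*c - b^2 := lamP_mul_lamM a b c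
  have hsum : L + l = a + c := lamP_add_lamM a b c
  have ha : (a - L) * (a - l) = -b^2 := by linear_combination (-a) * hsum + hprod
  refine ⟨abs_le.2 ⟨?_, ?_⟩, abs_le.2 ⟨?_, ?_⟩, abs_le.2 ⟨?_, ?_⟩⟩
  · have := neg_abs_le l; linarith [abs_le.1 hla]
  · linarith [abs_le.1 hLa]
  · nlinarith [abs_le.1 hLa, abs_le.1 hla, sq_nonneg (b - 2*αs), sq_nonneg (b + 2*αs)]
  · nlinarith [abs_le.1 hLa, abs_le.1 hla, sq_nonneg (b - 2*αs), sq_nonneg (b + 2*αs)]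
  · linarith [abs_le.1 hla]
  · linarith [abs_le.1 hLa]

/-! ### Dual characterizations and convexity -/

lemma schS3_le_iff {p q : ℝ} (hpq : Real.HolderConjugate p q) {αs : ℝ} (hαs : 0 ≤ αs)
    (x : ℝ × ℝ × ℝ) :
    schS3 q x ≤ αs ↔ ∀ y : ℝ × ℝ × ℝ, schS3 p y ≤ 1 → tr2 y x ≤ αs := by
  constructor
  · intro h y hy
    calc tr2 y x ≤ schS p y.1 y.2.1 y.2.2 * schS q x.1 x.2.1 x.2.2 :=
          vonNeumann hpq _ _ _ _ _ _
      _ ≤ 1 * αs := by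
          apply mul_le_mul hy (by exact h) (schS_nonneg _ _ _ _) zero_le_one
      _ = αs := one_mul _
  · intro h
    obtain ⟨a', b', c', hfeas, hval⟩ :=
      exists_dual_abc hpq.symm (zero_le_one) x.1 x.2.1 x.2.2
    have := h (a', b', c') hfeas
    rw [show tr2 (a',b',c') x = x.1*a' + 2*(x.2.1*b') + x.2.2*c' by simp [tr2]; ring] at this
    rw [hval, one_mul] at this
    exact this

lemma eucl_le_iff {αf : ℝ} (hαf : 0 ≤ αf) (v : Fin 2 → ℝ) :
    euclNorm2 v ≤ αf ↔ ∀ y : Fin 2 → ℝ, euclNorm2 y ≤ 1 → y 0 * v 0 + y 1 * v 1 ≤ αf := by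
  constructor
  · intro h y hy
    calc y 0 * v 0 + y 1 * v 1 ≤ euclNorm2 y * euclNorm2 v := eucl_CS y v
      _ ≤ 1 * αf := mul_le_mul hy h (eucl_nonneg v) zero_le_one
      _ = αf := one_mul _
  · intro h
    obtain ⟨y, hy1, hy2⟩ := exists_dual_eucl zero_le_one v
    rw [one_mul] at hy2
    rw [← hy2]
    exact h y hy1

lemma convex_Bsch {p q : ℝ} (hpq : Real.HolderConjugate p q) {αs : ℝ} (hαs : 0 ≤ αs) :
    Convex ℝ {x : ℝ × ℝ × ℝ | schS3 q x ≤ αs} := by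
  intro x hx y hy s t hs ht hst
  rw [Set.mem_setOf_eq, schS3_le_iff hpq hαs] at hx hy ⊢
  intro z hz
  have h1 := hx z hz
  have h2 := hy z hz
  have key : tr2 z (s • x + t • y) = s * tr2 z x + t * tr2 z y := by
    simp only [tr2, Prod.fst_add, Prod.snd_add, Prod.smul_fst, Prod.smul_snd, smul_eq_mul]
    ring
  rw [key]
  nlinarith
lemma convex_Beucl {αf : ℝ} (hαf : 0 ≤ αf) :
    Convex ℝ {v : Fin 2 → ℝ | euclNorm2 v ≤ αf} := by
  intro x hx y hy s t hs ht hst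
  rw [Set.mem_setOf_eq, eucl_le_iff hαf] at hx hy ⊢
  intro z hz
  have h1 := hx z hz
  have h2 := hy z hz
  have key : z 0 * (s • x + t • y) 0 + z 1 * (s • x + t • y) 1
      = s * (z 0 * x 0 + z 1 * x 1) + t * (z 0 * y 0 + z 1 * y 1) := by
    simp only [Pi.add_apply, Pi.smul_apply, smul_eq_mul]
    ring
  rw [key]
  nlinarith

lemma cont_eucl : Continuous euclNorm2 :=
  Real.continuous_sqrt.comp (((continuous_apply 0).pow 2).add ((continuous_apply 1).pow 2))

lemma cont_schS3 {q : ℝ} (hq : 0 < q) : Continuous (schS3 q) := by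
  have c1 : Continuous fun x : ℝ × ℝ × ℝ => x.1 := continuous_fst
  have c2 : Continuous fun x : ℝ × ℝ × ℝ => x.2.1 := continuous_fst.comp continuous_snd
  have c3 : Continuous fun x : ℝ × ℝ × ℝ => x.2.2 := continuous_snd.comp continuous_snd
  have csq : Continuous fun x : ℝ × ℝ × ℝ => Real.sqrt ((x.1 - x.2.2)^2 + 4*x.2.1^2) :=
    Real.continuous_sqrt.comp (((c1.sub c3).pow 2).add (continuous_const.mul (c2.pow 2)))
  have cP : Continuous fun x : ℝ × ℝ × ℝ => lamP x.1 x.2.1 x.2.2 :=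
    (((c1.add c3).add csq).div_const 2)
  have cM : Continuous fun x : ℝ × ℝ × ℝ => lamM x.1 x.2.1 x.2.2 :=
    (((c1.add c3).sub csq).div_const 2)
  have cabs : Continuous fun x : ℝ × ℝ × ℝ =>
      |lamP x.1 x.2.1 x.2.2| ^ q + |lamM x.1 x.2.1 x.2.2| ^ q :=
    (cP.abs.rpow_const fun _ => Or.inr hq.le).add (cM.abs.rpow_const fun _ => Or.inr hq.le)
  exact cabs.rpow_const fun _ => Or.inr (by positivity)

lemma isCompact_Beucl {αf : ℝ} (hαf : 0 ≤ αf) :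
    IsCompact {v : Fin 2 → ℝ | euclNorm2 v ≤ αf} := by
  apply Metric.isCompact_of_isClosed_isBounded
  · exact isClosed_le cont_eucl continuous_const
  · refine Bornology.IsBounded.subset (Metric.isBounded_closedBall
      (x := (0 : Fin 2 → ℝ)) (r := αf)) ?_
    intro v hv
    simp only [Metric.mem_closedBall, dist_zero_right]
    rw [pi_norm_le_iff_of_nonneg hαf]
    intro i
    rw [Real.norm_eq_abs]
    exact (abs_le_eucl v i).trans hv

lemma isCompact_Bsch {q : ℝ} (hq : 0 < q) {αs : ℝ} (hαs : 0 ≤ αs) :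
    IsCompact {x : ℝ × ℝ × ℝ | schS3 q x ≤ αs} := by
  apply Metric.isCompact_of_isClosed_isBounded
  · exact isClosed_le (cont_schS3 hq) continuous_const
  · refine Bornology.IsBounded.subset (Metric.isBounded_closedBall
      (x := (0 : ℝ × ℝ × ℝ)) (r := 2*αs)) ?_
    intro x hx
    obtain ⟨h1, h2, h3⟩ := entries_bound hq hx
    simp only [Metric.mem_closedBall, dist_zero_right, Prod.norm_def, Real.norm_eq_abs]
    exact max_le (by linarith) (max_le (by linarith) (by linarith))

lemma conv_add₁ (f₁ f₂ h : G → ℝ) (r : G) :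
    conv (fun s => f₁ s + f₂ s) h r = conv f₁ h r + conv f₂ h r := by
  simp [conv, add_mul, Finset.sum_add_distrib]

lemma conv_smul₁ (k : ℝ) (f h : G → ℝ) (r : G) :
    conv (fun s => k * f s) h r = k * conv f h r := by
  simp only [conv, Finset.mul_sum]
  exact Finset.sum_congr rfl fun s _ => by ring

lemma dv_add (d₁ d₂ : G → ℝ) (m₁ m₂ : G → ℝ × ℝ × ℝ) (r : G) (i : Fin 2) :
    dv d₁ d₂ (m₁ + m₂) r i = dv d₁ d₂ m₁ r i + dv d₁ d₂ m₂ r i := by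
  have h1 : (fun s => ((m₁ + m₂) s).1) = fun s => (m₁ s).1 + (m₂ s).1 := rfl
  have h2 : (fun s => ((m₁ + m₂) s).2.1) = fun s => (m₁ s).2.1 + (m₂ s).2.1 := rfl
  have h3 : (fun s => ((m₁ + m₂) s).2.2) = fun s => (m₁ s).2.2 + (m₂ s).2.2 := rfl
  fin_cases i <;> simp [dv, h1, h2, h3, conv_add₁] <;> ring

lemma dv_smul (d₁ d₂ : G → ℝ) (k : ℝ) (m : G → ℝ × ℝ × ℝ) (r : G) (i : Fin 2) :
    dv d₁ d₂ (k • m) r i = k * dv d₁ d₂ m r i := by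
  have h1 : (fun s => ((k • m) s).1) = fun s => k * (m s).1 := rfl
  have h2 : (fun s => ((k • m) s).2.1) = fun s => k * (m s).2.1 := rfl
  have h3 : (fun s => ((k • m) s).2.2) = fun s => k * (m s).2.2 := rfl
  fin_cases i <;> simp [dv, h1, h2, h3, conv_smul₁] <;> ring

/-- The pairing of a dual variable with the data. -/
noncomputable def dualPair (d₁ d₂ g : G → ℝ)
    (z : (G → Fin 2 → ℝ) × (G → ℝ × ℝ × ℝ)) : ℝ :=
  ∑ r, (z.1 r 0 * grad d₁ d₂ g r 0 + z.1 r 1 * grad d₁ d₂ g r 1)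

/-- The Lagrangian. -/
noncomputable def Lfun (d₁ d₂ g : G → ℝ) (z : (G → Fin 2 → ℝ) × (G → ℝ × ℝ × ℝ))
    (u : G → Fin 2 → ℝ) : ℝ :=
  dualPair d₁ d₂ g z +
    ∑ r, (u r 0 * (dv d₁ d₂ z.2 r 0 - z.1 r 0) + u r 1 * (dv d₁ d₂ z.2 r 1 - z.1 r 1))

/-- The primal objective. -/
noncomputable def Pobj (d₁ d₂ g : G → ℝ) (αf αs p : ℝ) (u : G → Fin 2 → ℝ) : ℝ :=
  αf * ∑ r, euclNorm2 (fun i => grad d₁ d₂ g r i - u r i) +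
    αs * ∑ r, schS3 p (Eabc d₁ d₂ u r)

/-- The dual feasible set. -/
def K (αf αs q : ℝ) : Set ((G → Fin 2 → ℝ) × (G → ℝ × ℝ × ℝ)) :=
  (Set.univ.pi fun _ : G => {v : Fin 2 → ℝ | euclNorm2 v ≤ αf}) ×ˢ
    (Set.univ.pi fun _ : G => {x : ℝ × ℝ × ℝ | schS3 q x ≤ αs})

lemma mem_K {αf αs q : ℝ} {z : (G → Fin 2 → ℝ) × (G → ℝ × ℝ × ℝ)} :
    z ∈ K (G := G) αf αs q ↔
      (∀ r, euclNorm2 (z.1 r) ≤ αf) ∧ ∀ r, schS3 q (z.2 r) ≤ αs := by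
  simp [K, Set.mem_pi]

/-- The linear constraint/value map. -/
noncomputable def Phi (d₁ d₂ g : G → ℝ) :
    ((G → Fin 2 → ℝ) × (G → ℝ × ℝ × ℝ)) →ₗ[ℝ] ((G → Fin 2 → ℝ) × ℝ) where
  toFun z := (fun r i => dv d₁ d₂ z.2 r i - z.1 r i, dualPair d₁ d₂ g z)
  map_add' z₁ z₂ := by
    refine Prod.ext ?_ ?_
    · funext r i
      show dv d₁ d₂ (z₁.2 + z₂.2) r i - (z₁.1 r i + z₂.1 r i) = _
      rw [dv_add]
      show _ = (dv d₁ d₂ z₁.2 r i - z₁.1 r i) + (dv d₁ d₂ z₂.2 r i - z₂.1 r i)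
      ring
    · show dualPair d₁ d₂ g (z₁ + z₂) = dualPair d₁ d₂ g z₁ + dualPair d₁ d₂ g z₂
      simp only [dualPair, ← Finset.sum_add_distrib]
      refine Finset.sum_congr rfl fun r _ => ?_
      show ((z₁.1 r 0 + z₂.1 r 0) * _ + (z₁.1 r 1 + z₂.1 r 1) * _) = _
      ring
  map_smul' k z := by
    refine Prod.ext ?_ ?_
    · funext r i
      show dv d₁ d₂ (k • z.2) r i - k * z.1 r i = k * (dv d₁ d₂ z.2 r i - z.1 r i)
      rw [dv_smul]
      ring
    · show dualPair d₁ d₂ g (k • z) = k * dualPair d₁ d₂ g z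
      simp only [dualPair, Finset.mul_sum]
      refine Finset.sum_congr rfl fun r _ => ?_
      show (k * z.1 r 0) * _ + (k * z.1 r 1) * _ = _
      ring

/-- Rewriting the Lagrangian as a pointwise pairing. -/
lemma Lfun_eq (d₁ d₂ g : G → ℝ) (z : (G → Fin 2 → ℝ) × (G → ℝ × ℝ × ℝ))
    (u : G → Fin 2 → ℝ) :
    Lfun d₁ d₂ g z u =
      (∑ r, ((grad d₁ d₂ g r 0 - u r 0) * z.1 r 0 + (grad d₁ d₂ g r 1 - u r 1) * z.1 r 1))
        + ∑ r, tr2 (z.2 r) (Eabc d₁ d₂ u r) := by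
  rw [Lfun, dualPair, sum_tr2_E (m := z.2) (u := u), ← Finset.sum_add_distrib,
    ← Finset.sum_add_distrib]
  refine Finset.sum_congr rfl fun r _ => ?_
  ring

/-- Pointwise bound: the Lagrangian is at most the primal objective on `K`. -/
lemma Lfun_le_Pobj (d₁ d₂ g : G → ℝ) {αf αs p q : ℝ} (hpq : Real.HolderConjugate p q)
    {z : (G → Fin 2 → ℝ) × (G → ℝ × ℝ × ℝ)} (hz : z ∈ K (G := G) αf αs q)
    (u : G → Fin 2 → ℝ) :
    Lfun d₁ d₂ g z u ≤ Pobj d₁ d₂ g αf αs p u := by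
  obtain ⟨hz1, hz2⟩ := mem_K.1 hz
  rw [Lfun_eq, Pobj, Finset.mul_sum, Finset.mul_sum]
  apply add_le_add <;> apply Finset.sum_le_sum <;> intro r _
  · calc (grad d₁ d₂ g r 0 - u r 0) * z.1 r 0 + (grad d₁ d₂ g r 1 - u r 1) * z.1 r 1
        ≤ euclNorm2 (fun i => grad d₁ d₂ g r i - u r i) * euclNorm2 (z.1 r) :=
          eucl_CS (fun i => grad d₁ d₂ g r i - u r i) (z.1 r)
      _ ≤ euclNorm2 (fun i => grad d₁ d₂ g r i - u r i) * αf :=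
          mul_le_mul_of_nonneg_left (hz1 r) (eucl_nonneg _)
      _ = αf * euclNorm2 (fun i => grad d₁ d₂ g r i - u r i) := mul_comm _ _
  · have h := vonNeumann hpq (Eabc d₁ d₂ u r).1 (Eabc d₁ d₂ u r).2.1 (Eabc d₁ d₂ u r).2.2
      (z.2 r).1 (z.2 r).2.1 (z.2 r).2.2
    calc tr2 (z.2 r) (Eabc d₁ d₂ u r)
        ≤ schS3 p (Eabc d₁ d₂ u r) * schS3 q (z.2 r) := by
          rw [show tr2 (z.2 r) (Eabc d₁ d₂ u r) =
            (Eabc d₁ d₂ u r).1 * (z.2 r).1 + 2*((Eabc d₁ d₂ u r).2.1 * (z.2 r).2.1)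
              + (Eabc d₁ d₂ u r).2.2 * (z.2 r).2.2 by rw [tr2]; ring]
          exact h
      _ ≤ schS3 p (Eabc d₁ d₂ u r) * αs :=
          mul_le_mul_of_nonneg_left (hz2 r) (schS_nonneg _ _ _ _)
      _ = αs * schS3 p (Eabc d₁ d₂ u r) := mul_comm _ _

/-- Attainment: the supremum of the Lagrangian over `K` reaches the primal objective. -/
lemma exists_attain (d₁ d₂ g : G → ℝ) {αf αs p q : ℝ} (hpq : Real.HolderConjugate p q)
    (hαf : 0 ≤ αf) (hαs : 0 ≤ αs) (u : G → Fin 2 → ℝ) :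
    ∃ z ∈ K (G := G) αf αs q, Lfun d₁ d₂ g z u = Pobj d₁ d₂ g αf αs p u := by
  have h1 : ∀ r : G, ∃ v : Fin 2 → ℝ, euclNorm2 v ≤ αf ∧
      v 0 * (grad d₁ d₂ g r 0 - u r 0) + v 1 * (grad d₁ d₂ g r 1 - u r 1)
        = αf * euclNorm2 (fun i => grad d₁ d₂ g r i - u r i) := fun r =>
    exists_dual_eucl hαf (fun i => grad d₁ d₂ g r i - u r i)
  have h2 : ∀ r : G, ∃ y : ℝ × ℝ × ℝ, schS3 q y ≤ αs ∧
      tr2 y (Eabc d₁ d₂ u r) = αs * schS3 p (Eabc d₁ d₂ u r) := by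
    intro r
    obtain ⟨a', b', c', hf, hv⟩ := exists_dual_abc hpq hαs
      (Eabc d₁ d₂ u r).1 (Eabc d₁ d₂ u r).2.1 (Eabc d₁ d₂ u r).2.2
    refine ⟨(a', b', c'), hf, ?_⟩
    rw [show tr2 (a',b',c') (Eabc d₁ d₂ u r) =
      (Eabc d₁ d₂ u r).1*a' + 2*((Eabc d₁ d₂ u r).2.1*b') + (Eabc d₁ d₂ u r).2.2*c'
      by rw [tr2]; ring, hv]
    rfl
  choose V hV1 hV2 using h1
  choose m hm1 hm2 using h2
  refine ⟨(V, m), mem_K.2 ⟨hV1, hm1⟩, ?_⟩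
  rw [Lfun_eq, Pobj, Finset.mul_sum, Finset.mul_sum]
  congr 1
  · refine Finset.sum_congr rfl fun r _ => ?_
    rw [← hV2 r]; ring
  · exact Finset.sum_congr rfl fun r _ => hm2 r

/-- Weak duality, in internal terms. -/
lemma weak_duality (d₁ d₂ g : G → ℝ) {αf αs p q : ℝ} (hpq : Real.HolderConjugate p q)
    (N : G → Matrix (Fin 2) (Fin 2) ℝ) (hN : ∀ r, (N r).IsHermitian)
    (h1 : ∀ r : G, schS3 q (mOf N r) ≤ αs)
    (h2 : ∀ r : G, euclNorm2 (divN d₁ d₂ N r) ≤ αf)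
    (u : G → Fin 2 → ℝ) :
    ∑ r, (N r * hess d₁ d₂ g r).trace ≤ Pobj d₁ d₂ g αf αs p u := by
  set z : (G → Fin 2 → ℝ) × (G → ℝ × ℝ × ℝ) :=
    (fun r i => dv d₁ d₂ (mOf N) r i, mOf N) with hzdef
  have hzK : z ∈ K (G := G) αf αs q := by
    refine mem_K.2 ⟨fun r => ?_, h1⟩
    have : z.1 r = divN d₁ d₂ N r := funext fun i => dv_mOf d₁ d₂ N hN r i
    rw [this]
    exact h2 r
  have hval : ∑ r, (N r * hess d₁ d₂ g r).trace = Lfun d₁ d₂ g z u := by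
    rw [dual_value d₁ d₂ g N hN, Lfun, dualPair]
    have hz : ∀ r, (∀ i, z.1 r i = dv d₁ d₂ z.2 r i) := fun r i => rfl
    rw [show (∑ r, (u r 0 * (dv d₁ d₂ z.2 r 0 - z.1 r 0)
        + u r 1 * (dv d₁ d₂ z.2 r 1 - z.1 r 1))) = 0 from
      Finset.sum_eq_zero fun r _ => by rw [← hz r 0, ← hz r 1]; ring]
    rw [add_zero]
    exact Finset.sum_congr rfl fun r _ => by rw [← hz r 0, ← hz r 1]; ring
  rw [hval]
  exact Lfun_le_Pobj d₁ d₂ g hpq hzK u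

lemma pi_decomp [DecidableEq G] (z : G → Fin 2 → ℝ) :
    z = ∑ r, ∑ i, z r i • (Pi.single r (Pi.single i (1:ℝ)) : G → Fin 2 → ℝ) := by
  funext r' i'
  simp only [Finset.sum_apply, Fin.sum_univ_two, Pi.add_apply, Pi.smul_apply]
  simp only [Pi.single_apply, smul_eq_mul]
  simp only [apply_ite (fun (g : Fin 2 → ℝ) => g i'), Pi.zero_apply, Pi.single_apply,
    mul_ite, mul_zero, mul_one]
  rw [Finset.sum_add_distrib, Finset.sum_ite_eq Finset.univ r', Finset.sum_ite_eq Finset.univ r']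
  fin_cases i' <;> simp

lemma clm_decomp [DecidableEq G] (f : ((G → Fin 2 → ℝ) × ℝ) →L[ℝ] ℝ)
    (z : G → Fin 2 → ℝ) (t : ℝ) :
    f (z, t) = (∑ r, ∑ i, z r i * f (Pi.single r (Pi.single i (1:ℝ)), 0)) + t * f (0, 1) := by
  have hz : (z, (0:ℝ)) = ∑ r, ∑ i, z r i • ((Pi.single r (Pi.single i (1:ℝ)) : G → Fin 2 → ℝ),
      (0:ℝ)) := by
    refine Prod.ext ?_ ?_
    · simp only [Prod.fst_sum, Prod.smul_fst]
      exact pi_decomp z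
    · simp only [Prod.snd_sum, Prod.smul_snd, smul_zero, Finset.sum_const_zero]
  have hsplit : ((z, t) : (G → Fin 2 → ℝ) × ℝ) = (z, (0:ℝ)) + t • ((0 : G → Fin 2 → ℝ), (1:ℝ)) := by
    refine Prod.ext ?_ ?_ <;> simp
  rw [hsplit, map_add, ContinuousLinearMap.map_smul, hz, map_sum]
  simp only [map_sum, ContinuousLinearMap.map_smul, smul_eq_mul]

lemma key_strong [DecidableEq G] (d₁ d₂ g : G → ℝ) {αf αs p q : ℝ}
    (hpq : Real.HolderConjugate p q) (hαf : 0 ≤ αf) (hαs : 0 ≤ αs)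
    {c : ℝ} (hc : 0 < c)
    (hnot : ((0 : G → Fin 2 → ℝ), c) ∉ (Phi d₁ d₂ g) '' (K (G := G) αf αs q)) :
    ∃ u : G → Fin 2 → ℝ, Pobj d₁ d₂ g αf αs p u < c := by
  have hq0 : (0:ℝ) < q := hpq.symm.pos
  have hKc : IsCompact (K (G := G) αf αs q) :=
    (isCompact_univ_pi fun _ => isCompact_Beucl hαf).prod
      (isCompact_univ_pi fun _ => isCompact_Bsch hq0 hαs)
  have hKconv : Convex ℝ (K (G := G) αf αs q) :=
    (convex_pi fun _ _ => convex_Beucl hαf).prod (convex_pi fun _ _ => convex_Bsch hpq hαs)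
  have hΦcont : Continuous (Phi d₁ d₂ g (G := G)) :=
    (Phi d₁ d₂ g).continuous_of_finiteDimensional
  have hCc : IsCompact ((Phi d₁ d₂ g) '' (K (G := G) αf αs q)) := hKc.image hΦcont
  have hCconv : Convex ℝ ((Phi d₁ d₂ g) '' (K (G := G) αf αs q)) :=
    hKconv.linear_image (Phi d₁ d₂ g)
  obtain ⟨f, u₀, hfx, hfC⟩ :=
    geometric_hahn_banach_point_closed hCconv hCc.isClosed hnot
  set uu : G → Fin 2 → ℝ := fun r i => f (Pi.single r (Pi.single i (1:ℝ)), 0) with huu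
  set s₀ : ℝ := f (0, 1) with hs₀def
  have hdec : ∀ (z : G → Fin 2 → ℝ) (t : ℝ),
      f (z, t) = (∑ r, ∑ i, z r i * uu r i) + t * s₀ := fun z t => clm_decomp f z t
  -- zero is feasible
  have h0K : ((0 : G → Fin 2 → ℝ), (0 : G → ℝ × ℝ × ℝ)) ∈ K (G := G) αf αs q := by
    refine mem_K.2 ⟨fun r => ?_, fun r => ?_⟩
    · simpa [euclNorm2] using hαf
    · show schS3 q (0,0,0) ≤ αs
      simpa [schS3, schS_zero hq0.ne'] using hαs
  have hu₀neg : u₀ < 0 := by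
    have h := hfC _ (Set.mem_image_of_mem _ h0K)
    rw [show (Phi d₁ d₂ g) ((0 : G → Fin 2 → ℝ), (0 : G → ℝ × ℝ × ℝ)) = 0 from map_zero _,
      map_zero] at h
    exact h
  have hfx' : c * s₀ < u₀ := by
    have h := hfx
    rw [hdec 0 c, show (∑ r : G, ∑ i : Fin 2, (0 : G → Fin 2 → ℝ) r i * uu r i) = 0 by simp,
      zero_add] at h
    exact h
  have hs0neg : s₀ < 0 := by nlinarith
  set u : G → Fin 2 → ℝ := fun r i => uu r i / s₀ with hudef
  obtain ⟨zs, hzK, hzeq⟩ := exists_attain d₁ d₂ g hpq hαf hαs u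
  refine ⟨u, ?_⟩
  rw [← hzeq]
  -- evaluate f on Phi zs
  have hz := hfC _ (Set.mem_image_of_mem _ hzK)
  have hPhi : f ((Phi d₁ d₂ g) zs)
      = (∑ r, ∑ i, (dv d₁ d₂ zs.2 r i - zs.1 r i) * uu r i) + dualPair d₁ d₂ g zs * s₀ := by
    rw [show (Phi d₁ d₂ g) zs
      = (fun r i => dv d₁ d₂ zs.2 r i - zs.1 r i, dualPair d₁ d₂ g zs) from rfl, hdec]
  rw [hPhi] at hz
  set B : ℝ := ∑ r, ∑ i, (dv d₁ d₂ zs.2 r i - zs.1 r i) * uu r i with hB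
  set S : ℝ := dualPair d₁ d₂ g zs with hS
  have hLf : Lfun d₁ d₂ g zs u = S + B / s₀ := by
    rw [Lfun, ← hS, hB, Finset.sum_div]
    congr 1
    refine Finset.sum_congr rfl fun r _ => ?_
    rw [Fin.sum_univ_two, hudef]
    show uu r 0 / s₀ * (dv d₁ d₂ zs.2 r 0 - zs.1 r 0)
        + uu r 1 / s₀ * (dv d₁ d₂ zs.2 r 1 - zs.1 r 1) = _
    field_simp [hs0neg.ne]
  rw [hLf]
  have hd : B / s₀ * s₀ = B := div_mul_cancel₀ B hs0neg.ne
  nlinarith [hz, hfx', hs0neg, hd]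

lemma sym2_herm (a b c : ℝ) : (!![a, b; b, c]).IsHermitian := by
  ext i j
  fin_cases i <;> fin_cases j <;> simp [Matrix.conjTranspose_apply]

/-- Proposition 1 of the paper for exponents `1 < p < ∞`: the minimization form
of the generalized Hessian-Schatten norm equals its dual (maximization) form. -/
theorem ghs_duality
    (d₁ d₂ g : G → ℝ) (αf αs p q : ℝ)
    (hαf : 0 < αf) (hαs : 0 < αs) (hp : 1 < p) (hq : 1 < q) (hpq : 1 / p + 1 / q = 1) :
    sInf {x : ℝ | ∃ u : G → Fin 2 → ℝ,
        x = αf * ∑ r : G, euclNorm2 (fun i => grad d₁ d₂ g r i - u r i) +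
            αs * ∑ r : G,
              (|(symJac_isHermitian d₁ d₂ u r).eigenvalues 0| ^ p +
               |(symJac_isHermitian d₁ d₂ u r).eigenvalues 1| ^ p) ^ (1 / p)} =
    sSup {x : ℝ | ∃ (N : G → Matrix (Fin 2) (Fin 2) ℝ) (hN : ∀ r, (N r).IsHermitian),
        (∀ r : G, (|(hN r).eigenvalues 0| ^ q + |(hN r).eigenvalues 1| ^ q) ^ (1 / q) ≤ αs) ∧
        (∀ r : G, euclNorm2 (divN d₁ d₂ N r) ≤ αf) ∧
        x = ∑ r : G, (N r * hess d₁ d₂ g r).trace} := by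
  classical
  have hpq' : Real.HolderConjugate p q := conj_facts hp hpq
  have hq0 : (0:ℝ) < q := hpq'.symm.pos
  -- Bridge for the primal objective terms
  have hp_term : ∀ (u : G → Fin 2 → ℝ) (r : G),
      (|(symJac_isHermitian d₁ d₂ u r).eigenvalues 0| ^ p +
       |(symJac_isHermitian d₁ d₂ u r).eigenvalues 1| ^ p) ^ (1 / p)
        = schS3 p (Eabc d₁ d₂ u r) := by
    intro u r
    have hb := schS_entries (symJac_isHermitian d₁ d₂ u r) p
    have hJ : (symJac d₁ d₂ u r 0 0, symJac d₁ d₂ u r 0 1, symJac d₁ d₂ u r 1 1)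
        = Eabc d₁ d₂ u r := by
      simp only [symJac, Eabc, Matrix.cons_val', Matrix.cons_val_zero, Matrix.cons_val_one,
        Matrix.head_cons, Matrix.empty_val', Matrix.cons_val_fin_one, Matrix.head_fin_const,
        Matrix.of_apply]
      refine Prod.ext ?_ (Prod.ext rfl ?_) <;> ring
    calc (|(symJac_isHermitian d₁ d₂ u r).eigenvalues 0| ^ p +
          |(symJac_isHermitian d₁ d₂ u r).eigenvalues 1| ^ p) ^ (1 / p)
        = phi2 p ((symJac_isHermitian d₁ d₂ u r).eigenvalues 0)
            ((symJac_isHermitian d₁ d₂ u r).eigenvalues 1) := rfl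
      _ = schS p (symJac d₁ d₂ u r 0 0) (symJac d₁ d₂ u r 0 1) (symJac d₁ d₂ u r 1 1) :=
          hb.symm
      _ = schS3 p (Eabc d₁ d₂ u r) := by rw [← hJ]; rfl
  have hPrimalEq : ∀ u : G → Fin 2 → ℝ,
      αf * ∑ r : G, euclNorm2 (fun i => grad d₁ d₂ g r i - u r i) +
        αs * ∑ r : G,
          (|(symJac_isHermitian d₁ d₂ u r).eigenvalues 0| ^ p +
           |(symJac_isHermitian d₁ d₂ u r).eigenvalues 1| ^ p) ^ (1 / p)
        = Pobj d₁ d₂ g αf αs p u := by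
    intro u
    rw [Pobj]
    congr 1
    rw [Finset.sum_congr rfl fun r _ => hp_term u r]
  -- Bridge for the dual constraint terms
  have hd_term : ∀ (N : G → Matrix (Fin 2) (Fin 2) ℝ) (hN : ∀ r, (N r).IsHermitian) (r : G),
      (|(hN r).eigenvalues 0| ^ q + |(hN r).eigenvalues 1| ^ q) ^ (1 / q)
        = schS3 q (mOf N r) := by
    intro N hN r
    have hb := schS_entries (hN r) q
    calc (|(hN r).eigenvalues 0| ^ q + |(hN r).eigenvalues 1| ^ q) ^ (1 / q)
        = phi2 q ((hN r).eigenvalues 0) ((hN r).eigenvalues 1) := rfl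
      _ = schS q (N r 0 0) (N r 0 1) (N r 1 1) := hb.symm
      _ = schS3 q (mOf N r) := rfl
  -- weak duality
  have hweak : ∀ y ∈ {x : ℝ | ∃ (N : G → Matrix (Fin 2) (Fin 2) ℝ)
        (hN : ∀ r, (N r).IsHermitian),
        (∀ r : G, (|(hN r).eigenvalues 0| ^ q + |(hN r).eigenvalues 1| ^ q) ^ (1 / q) ≤ αs) ∧
        (∀ r : G, euclNorm2 (divN d₁ d₂ N r) ≤ αf) ∧
        x = ∑ r : G, (N r * hess d₁ d₂ g r).trace},
      ∀ u : G → Fin 2 → ℝ, y ≤ Pobj d₁ d₂ g αf αs p u := by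
    rintro y ⟨N, hN, hc1, hc2, rfl⟩ u
    refine weak_duality d₁ d₂ g hpq' N hN (fun r => ?_) hc2 u
    rw [← hd_term N hN r]
    exact hc1 r
  -- primal set facts
  have hPne : Set.Nonempty {x : ℝ | ∃ u : G → Fin 2 → ℝ,
      x = αf * ∑ r : G, euclNorm2 (fun i => grad d₁ d₂ g r i - u r i) +
          αs * ∑ r : G,
            (|(symJac_isHermitian d₁ d₂ u r).eigenvalues 0| ^ p +
             |(symJac_isHermitian d₁ d₂ u r).eigenvalues 1| ^ p) ^ (1 / p)} :=
    ⟨_, ⟨0, rfl⟩⟩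
  have hPbdd : BddBelow {x : ℝ | ∃ u : G → Fin 2 → ℝ,
      x = αf * ∑ r : G, euclNorm2 (fun i => grad d₁ d₂ g r i - u r i) +
          αs * ∑ r : G,
            (|(symJac_isHermitian d₁ d₂ u r).eigenvalues 0| ^ p +
             |(symJac_isHermitian d₁ d₂ u r).eigenvalues 1| ^ p) ^ (1 / p)} := by
    refine ⟨0, ?_⟩
    rintro x ⟨u, rfl⟩
    have h1 : 0 ≤ ∑ r : G, euclNorm2 (fun i => grad d₁ d₂ g r i - u r i) :=
      Finset.sum_nonneg fun r _ => eucl_nonneg _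
    have h2 : 0 ≤ ∑ r : G,
        (|(symJac_isHermitian d₁ d₂ u r).eigenvalues 0| ^ p +
         |(symJac_isHermitian d₁ d₂ u r).eigenvalues 1| ^ p) ^ (1 / p) :=
      Finset.sum_nonneg fun r _ => Real.rpow_nonneg (by positivity) _
    positivity
  -- dual set facts
  have hD0 : (0:ℝ) ∈ {x : ℝ | ∃ (N : G → Matrix (Fin 2) (Fin 2) ℝ)
      (hN : ∀ r, (N r).IsHermitian),
      (∀ r : G, (|(hN r).eigenvalues 0| ^ q + |(hN r).eigenvalues 1| ^ q) ^ (1 / q) ≤ αs) ∧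
      (∀ r : G, euclNorm2 (divN d₁ d₂ N r) ≤ αf) ∧
      x = ∑ r : G, (N r * hess d₁ d₂ g r).trace} := by
    refine ⟨fun _ => 0, fun _ => Matrix.isHermitian_zero, fun r => ?_, fun r => ?_, ?_⟩
    · rw [hd_term (fun _ => 0) (fun _ => Matrix.isHermitian_zero) r]
      show schS3 q (0,0,0) ≤ αs
      simpa [schS3, schS_zero hq0.ne'] using hαs.le
    · have : divN d₁ d₂ (fun _ => (0 : Matrix (Fin 2) (Fin 2) ℝ)) r = fun _ => 0 := by
        funext i
        simp [divN, conv]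
      rw [this]
      simpa [euclNorm2] using hαf.le
    · simp
  have hDne : Set.Nonempty {x : ℝ | ∃ (N : G → Matrix (Fin 2) (Fin 2) ℝ)
      (hN : ∀ r, (N r).IsHermitian),
      (∀ r : G, (|(hN r).eigenvalues 0| ^ q + |(hN r).eigenvalues 1| ^ q) ^ (1 / q) ≤ αs) ∧
      (∀ r : G, euclNorm2 (divN d₁ d₂ N r) ≤ αf) ∧
      x = ∑ r : G, (N r * hess d₁ d₂ g r).trace} := ⟨0, hD0⟩
  have hDbdd : BddAbove {x : ℝ | ∃ (N : G → Matrix (Fin 2) (Fin 2) ℝ)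
      (hN : ∀ r, (N r).IsHermitian),
      (∀ r : G, (|(hN r).eigenvalues 0| ^ q + |(hN r).eigenvalues 1| ^ q) ^ (1 / q) ≤ αs) ∧
      (∀ r : G, euclNorm2 (divN d₁ d₂ N r) ≤ αf) ∧
      x = ∑ r : G, (N r * hess d₁ d₂ g r).trace} :=
    ⟨Pobj d₁ d₂ g αf αs p 0, fun y hy => hweak y hy 0⟩
  apply le_antisymm
  · -- strong duality direction
    apply le_of_forall_gt_imp_ge_of_dense
    intro c hc
    have hc0 : 0 < c := lt_of_le_of_lt (le_csSup hDbdd hD0) hc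
    have hnot : ((0 : G → Fin 2 → ℝ), c) ∉ (Phi d₁ d₂ g) '' (K (G := G) αf αs q) := by
      rintro ⟨z, hzK, hzeq⟩
      set N : G → Matrix (Fin 2) (Fin 2) ℝ :=
        fun r => !![(z.2 r).1, (z.2 r).2.1; (z.2 r).2.1, (z.2 r).2.2] with hNdef
      have hN : ∀ r, (N r).IsHermitian := fun r => sym2_herm _ _ _
      have hmOf : mOf N = z.2 := by
        funext r
        show ((N r) 0 0, (N r) 0 1, (N r) 1 1) = z.2 r
        rw [hNdef]
        simp
      have h1 : (fun r i => dv d₁ d₂ z.2 r i - z.1 r i) = (0 : G → Fin 2 → ℝ) :=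
        congrArg Prod.fst hzeq
      have h2 : dualPair d₁ d₂ g z = c := congrArg Prod.snd hzeq
      have hdvV : ∀ (r : G) (i : Fin 2), dv d₁ d₂ z.2 r i = z.1 r i := by
        intro r i
        have := congrFun (congrFun h1 r) i
        simpa [sub_eq_zero] using this
      obtain ⟨hzK1, hzK2⟩ := mem_K.1 hzK
      have hmem : c ∈ {x : ℝ | ∃ (N : G → Matrix (Fin 2) (Fin 2) ℝ)
          (hN : ∀ r, (N r).IsHermitian),
          (∀ r : G, (|(hN r).eigenvalues 0| ^ q + |(hN r).eigenvalues 1| ^ q) ^ (1 / q) ≤ αs) ∧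
          (∀ r : G, euclNorm2 (divN d₁ d₂ N r) ≤ αf) ∧
          c = ∑ r : G, (N r * hess d₁ d₂ g r).trace} := by
        refine ⟨N, hN, fun r => ?_, fun r => ?_, ?_⟩
        · rw [hd_term N hN r, hmOf]
          exact hzK2 r
        · have : divN d₁ d₂ N r = z.1 r := by
            funext i
            rw [← dv_mOf d₁ d₂ N hN r i, hmOf, hdvV]
          rw [this]
          exact hzK1 r
        · rw [dual_value d₁ d₂ g N hN, hmOf, ← h2, dualPair]
          exact Finset.sum_congr rfl fun r _ => by rw [hdvV r 0, hdvV r 1]; ring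
      exact absurd (le_csSup hDbdd hmem) (not_le.2 hc)
    obtain ⟨u, hu⟩ := key_strong d₁ d₂ g hpq' hαf.le hαs.le hc0 hnot
    calc sInf _ ≤ αf * ∑ r : G, euclNorm2 (fun i => grad d₁ d₂ g r i - u r i) +
            αs * ∑ r : G,
              (|(symJac_isHermitian d₁ d₂ u r).eigenvalues 0| ^ p +
               |(symJac_isHermitian d₁ d₂ u r).eigenvalues 1| ^ p) ^ (1 / p) :=
          csInf_le hPbdd ⟨u, rfl⟩
      _ = Pobj d₁ d₂ g αf αs p u := hPrimalEq u
      _ ≤ c := hu.le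
  · -- weak duality direction
    refine csSup_le hDne fun y hy => le_csInf hPne ?_
    rintro x ⟨u, rfl⟩
    rw [hPrimalEq u]
    exact hweak y hy u

end GHSN
end

section
/- Let G be a finite additive abelian group, let M : G → Sym₂(ℝ) be a symmetric-matrix image, let α_s > 0, and let p, q ∈ (1, ∞) satisfy 1/p + 1/q = 1. Then the supremum of Σ_{r∈G} trace(N(r)·M(r)) over all symmetric-matrix images N : G → Sym₂(ℝ) satisfying ‖N(r)‖_{S(q)} ≤ α_s for every r ∈ G equals α_s·Σ_{r∈G} ‖M(r)‖_{S(p)}, and this supremum is attained. -/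
open scoped BigOperators



-- pair lemma
lemma pair_abs_rpow {x y u v : ℝ} (hs : x + y = u + v) (hm : x * y = u * v) (q : ℝ) :
    |x| ^ q + |y| ^ q = |u| ^ q + |v| ^ q := by
  have h : (x - u) * (x - v) = 0 := by linear_combination x * hs - hm
  rcases mul_eq_zero.mp h with h' | h'
  · have hx : x = u := by linarith [sub_eq_zero.mp h']
    have hy : y = v := by linarith
    rw [hx, hy]
  · have hx : x = v := by linarith [sub_eq_zero.mp h']
    have hy : y = u := by linarith
    rw [hx, hy, add_comm]

-- spectral decomposition over ℝ, cleaned up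
lemma herm_decomp {A : Matrix (Fin 2) (Fin 2) ℝ} (hA : A.IsHermitian) :
    ∃ U : Matrix (Fin 2) (Fin 2) ℝ, U * star U = 1 ∧ star U * U = 1 ∧
      A = U * Matrix.diagonal hA.eigenvalues * star U := by
  refine ⟨(hA.eigenvectorUnitary : Matrix (Fin 2) (Fin 2) ℝ),
    Matrix.mem_unitaryGroup_iff.mp (hA.eigenvectorUnitary).2, ?_, ?_⟩
  · exact Matrix.mem_unitaryGroup_iff'.mp (hA.eigenvectorUnitary).2
  · have h := hA.spectral_theorem
    have : (RCLike.ofReal ∘ hA.eigenvalues : Fin 2 → ℝ) = hA.eigenvalues := by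
      funext i; simp
    rwa [this] at h

-- trace/det vs eigenvalues
lemma herm_trace_det {A : Matrix (Fin 2) (Fin 2) ℝ} (hA : A.IsHermitian) :
    hA.eigenvalues 0 + hA.eigenvalues 1 = A.trace ∧
      hA.eigenvalues 0 * hA.eigenvalues 1 = A.det := by
  obtain ⟨U, h1, h2, hdec⟩ := herm_decomp hA
  constructor
  · have : A.trace = hA.eigenvalues 0 + hA.eigenvalues 1 := by
      conv_lhs => rw [hdec]
      rw [Matrix.trace_mul_cycle, h2, Matrix.one_mul,
        Matrix.trace_diagonal, Fin.sum_univ_two]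
    exact this.symm
  · have := hA.det_eq_prod_eigenvalues
    rw [Fin.prod_univ_two] at this
    simpa using this.symm

lemma trace_formula {A B : Matrix (Fin 2) (Fin 2) ℝ} (hA : A.IsHermitian)
    (hB : B.IsHermitian) :
    ∃ t : ℝ, 0 ≤ t ∧ t ≤ 1 ∧ (A * B).trace =
      t * (hA.eigenvalues 0 * hB.eigenvalues 0 + hA.eigenvalues 1 * hB.eigenvalues 1) +
      (1 - t) * (hA.eigenvalues 0 * hB.eigenvalues 1 + hA.eigenvalues 1 * hB.eigenvalues 0) := by
  obtain ⟨U, hU1, hU2, hUdec⟩ := herm_decomp hA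
  obtain ⟨V, hV1, hV2, hVdec⟩ := herm_decomp hB
  set a := hA.eigenvalues
  set b := hB.eigenvalues
  set W := star U * V with hW
  have hWW : W * star W = 1 := by
    rw [hW, star_mul, star_star, Matrix.mul_assoc, ← Matrix.mul_assoc V, hV1,
      Matrix.one_mul, hU2]
  have hWW' : star W * W = 1 := by
    rw [hW, star_mul, star_star, Matrix.mul_assoc, ← Matrix.mul_assoc U, hU1,
      Matrix.one_mul, hV2]
  -- orthogonality relations
  have e1 : W 0 0 * W 0 0 + W 0 1 * W 0 1 = 1 := by
    have := congrFun (congrFun hWW 0) 0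
    simpa [Matrix.mul_apply, Fin.sum_univ_two, Matrix.one_apply] using this
  have e2 : W 1 0 * W 1 0 + W 1 1 * W 1 1 = 1 := by
    have := congrFun (congrFun hWW 1) 1
    simpa [Matrix.mul_apply, Fin.sum_univ_two, Matrix.one_apply] using this
  have e3 : W 0 0 * W 0 0 + W 1 0 * W 1 0 = 1 := by
    have := congrFun (congrFun hWW' 0) 0
    simpa [Matrix.mul_apply, Fin.sum_univ_two, Matrix.one_apply] using this
  have htr : (A * B).trace =
      a 0 * b 0 * (W 0 0 * W 0 0) + a 0 * b 1 * (W 0 1 * W 0 1)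
      + a 1 * b 0 * (W 1 0 * W 1 0) + a 1 * b 1 * (W 1 1 * W 1 1) := by
    rw [hUdec, hVdec]
    simp only [hW, Matrix.trace_fin_two, Matrix.mul_apply, Fin.sum_univ_two,
      Matrix.diagonal_apply, Matrix.star_apply, star_trivial]
    ring_nf
    simp [Matrix.star_apply]
    ring
  refine ⟨W 0 0 * W 0 0, mul_self_nonneg _, by nlinarith [mul_self_nonneg (W 0 1)], ?_⟩
  rw [htr]
  linear_combination a 0 * b 1 * e1 + a 1 * b 0 * e3 + a 1 * b 1 * (e2 - e3)

lemma holder2 {p q : ℝ} (hpq : Real.HolderConjugate p q) (a0 a1 b0 b1 : ℝ) :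
    a0 * b0 + a1 * b1 ≤ (|a0| ^ p + |a1| ^ p) ^ (1/p) * (|b0| ^ q + |b1| ^ q) ^ (1/q) := by
  have := Real.inner_le_Lp_mul_Lq (Finset.univ) (![a0, a1]) (![b0, b1]) hpq
  simpa [Fin.sum_univ_two] using this

lemma trace_mul_le {p q : ℝ} (hpq : Real.HolderConjugate p q)
    {A B : Matrix (Fin 2) (Fin 2) ℝ} (hA : A.IsHermitian) (hB : B.IsHermitian) :
    (A * B).trace ≤ (|hA.eigenvalues 0| ^ p + |hA.eigenvalues 1| ^ p) ^ (1/p) *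
      (|hB.eigenvalues 0| ^ q + |hB.eigenvalues 1| ^ q) ^ (1/q) := by
  obtain ⟨t, ht0, ht1, htr⟩ := trace_formula hA hB
  set a0 := hA.eigenvalues 0; set a1 := hA.eigenvalues 1
  set b0 := hB.eigenvalues 0; set b1 := hB.eigenvalues 1
  have h1 := holder2 hpq a0 a1 b0 b1
  have h2 : a0 * b1 + a1 * b0 ≤
      (|a0| ^ p + |a1| ^ p) ^ (1/p) * (|b0| ^ q + |b1| ^ q) ^ (1/q) := by
    have := holder2 hpq a0 a1 b1 b0
    rwa [add_comm (|b1| ^ q)] at this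
  rw [htr]
  nlinarith [h1, h2]

lemma exists_opt {p q : ℝ} (hpq : Real.HolderConjugate p q) {αs : ℝ} (hαs : 0 < αs)
    {A : Matrix (Fin 2) (Fin 2) ℝ} (hA : A.IsHermitian) :
    ∃ (N : Matrix (Fin 2) (Fin 2) ℝ) (hN : N.IsHermitian),
      (|hN.eigenvalues 0| ^ q + |hN.eigenvalues 1| ^ q) ^ (1/q) ≤ αs ∧
      (N * A).trace = αs * (|hA.eigenvalues 0| ^ p + |hA.eigenvalues 1| ^ p) ^ (1/p) := by
  obtain ⟨U, hU1, hU2, hdec⟩ := herm_decomp hA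
  have hp1 : 1 < p := hpq.lt
  have hp0 : p ≠ 0 := by positivity
  have hq0 : q ≠ 0 := by have := hpq.symm.lt; positivity
  have hpq' : (p - 1) * q = p := hpq.sub_one_mul_conj
  set a := hA.eigenvalues with ha
  set S := |a 0| ^ p + |a 1| ^ p with hSdef
  have hS0 : 0 ≤ S := by positivity
  set c := S ^ (1/p) with hcdef
  have hc0 : 0 ≤ c := Real.rpow_nonneg hS0 _
  set d : Fin 2 → ℝ := fun i => αs * a i * |a i| ^ (p - 2) / c ^ (p - 1) with hddef
  set N := U * Matrix.diagonal d * star U with hNdef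
  have hN : N.IsHermitian := by
    rw [hNdef, Matrix.star_eq_conjTranspose]
    exact Matrix.isHermitian_mul_mul_conjTranspose U (Matrix.isHermitian_diagonal d)
  -- helper: |x| * |x|^(s) = |x|^(s+1) when s + 1 ≠ 0
  have hxx : ∀ (x s : ℝ), s + 1 ≠ 0 → |x| * |x| ^ s = |x| ^ (s + 1) := by
    intro x s hs
    rcases eq_or_ne x 0 with h | h
    · simp [h, Real.zero_rpow hs]
    · have hx : (0:ℝ) < |x| := abs_pos.mpr h
      rw [Real.rpow_add hx, Real.rpow_one, mul_comm]
  -- trace and det of N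
  have htrN : N.trace = d 0 + d 1 := by
    rw [hNdef, Matrix.trace_mul_cycle, hU2, Matrix.one_mul,
      Matrix.trace_diagonal, Fin.sum_univ_two]
  have hdetN : N.det = d 0 * d 1 := by
    have hUdet : U.det * (star U).det = 1 := by
      rw [← Matrix.det_mul, hU1, Matrix.det_one]
    rw [hNdef, Matrix.det_mul, Matrix.det_mul, Matrix.det_diagonal, Fin.prod_univ_two]
    linear_combination d 0 * d 1 * hUdet
  -- eigenvalues of N as a pair
  have hpair : |hN.eigenvalues 0| ^ q + |hN.eigenvalues 1| ^ q = |d 0| ^ q + |d 1| ^ q := by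
    obtain ⟨hs, hm⟩ := herm_trace_det hN
    exact pair_abs_rpow (by rw [hs, htrN]) (by rw [hm, hdetN]) q
  -- trace of N * A
  have cancel : ∀ X : Matrix (Fin 2) (Fin 2) ℝ, star U * (U * X) = X := by
    intro X; rw [← Matrix.mul_assoc, hU2, Matrix.one_mul]
  have hNA : N * A = U * (Matrix.diagonal d * Matrix.diagonal a) * star U := by
    rw [hNdef, hdec]
    simp only [Matrix.mul_assoc, cancel]
  have htrNA : (N * A).trace = d 0 * a 0 + d 1 * a 1 := by
    rw [hNA, Matrix.trace_mul_cycle, hU2, Matrix.one_mul,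
      Matrix.diagonal_mul_diagonal, Matrix.trace_diagonal, Fin.sum_univ_two]
  -- key scalar identities
  have hcp : c ^ p = S := by
    rw [hcdef, ← Real.rpow_mul hS0, one_div_mul_cancel hp0, Real.rpow_one]
  have hda : ∀ i, d i * a i = αs * |a i| ^ p / c ^ (p - 1) := by
    intro i
    have h1 : a i * a i = |a i| * |a i| := (abs_mul_abs_self (a i)).symm
    have h2 : |a i| * (|a i| * |a i| ^ (p - 2)) = |a i| ^ p := by
      rw [hxx _ _ (by linarith : (p-2) + 1 ≠ 0)]
      rw [show p - 2 + 1 = p - 1 by ring]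
      rw [hxx _ _ (by linarith : (p-1) + 1 ≠ 0)]
      rw [show p - 1 + 1 = p by ring]
    have h3 : αs * a i * |a i| ^ (p - 2) * a i = αs * |a i| ^ p := by
      linear_combination (αs * |a i| ^ (p - 2)) * h1 + αs * h2
    rw [hddef]
    simp only
    rw [div_mul_eq_mul_div, h3]
  have habsd : ∀ i, |d i| = αs * |a i| ^ (p - 1) / c ^ (p - 1) := by
    intro i
    rw [hddef]
    rw [abs_div, abs_mul, abs_mul, abs_of_pos hαs,
      abs_of_nonneg (Real.rpow_nonneg (abs_nonneg _) _),
      abs_of_nonneg (Real.rpow_nonneg hc0 _), mul_assoc,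
      hxx _ _ (by linarith : (p-2) + 1 ≠ 0), show p - 2 + 1 = p - 1 by ring]
  rcases eq_or_lt_of_le hS0 with hS | hS
  · -- S = 0 : everything vanishes
    have hc : c = 0 := by rw [hcdef, ← hS, Real.zero_rpow (by positivity)]
    have hd : ∀ i, d i = 0 := by
      intro i
      rw [hddef]
      simp [hc, Real.zero_rpow (show p - 1 ≠ 0 by linarith)]
    refine ⟨N, hN, ?_, ?_⟩
    · rw [hpair, hd 0, hd 1]
      simp only [abs_zero, Real.zero_rpow hq0, add_zero, zero_add]
      rw [Real.zero_rpow (by positivity)]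
      exact hαs.le
    · rw [htrNA, hd 0, hd 1, hc]
      ring
  · -- S > 0
    have hc : 0 < c := Real.rpow_pos_of_pos hS _
    have hcp1 : 0 < c ^ (p - 1) := Real.rpow_pos_of_pos hc _
    refine ⟨N, hN, ?_, ?_⟩
    · rw [hpair]
      have hdq : ∀ i, |d i| ^ q = αs ^ q * |a i| ^ p / c ^ p := by
        intro i
        rw [habsd i, Real.div_rpow (by positivity) hcp1.le, Real.mul_rpow hαs.le
          (Real.rpow_nonneg (abs_nonneg _) _),
          ← Real.rpow_mul (abs_nonneg _), ← Real.rpow_mul hc.le, hpq']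
      rw [hdq 0, hdq 1, hcp, ← add_div, ← mul_add, ← hSdef,
        mul_div_assoc, div_self hS.ne', mul_one,
        ← Real.rpow_mul hαs.le, mul_one_div_cancel hq0, Real.rpow_one]
    · rw [htrNA, hda 0, hda 1, ← add_div, ← mul_add, ← hSdef, ← hcp]
      rw [div_eq_iff hcp1.ne']
      have hcc : c ^ (1:ℝ) * c ^ (p - 1) = c ^ p := by
        rw [← Real.rpow_add hc]; norm_num
      rw [← hcc, Real.rpow_one]; ring

/-- Dual (maximization) representation of the mixed norm `‖M‖_{1,S(p)}`:
for a finite abelian group `G`, a symmetric-matrix image `M : G → Sym₂(ℝ)`,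
`α_s > 0` and conjugate exponents `1 < p, q < ∞`, the supremum of
`∑_r trace (N r * M r)` over symmetric-matrix images `N` with
`‖N r‖_{S(q)} ≤ α_s` for all `r` equals `α_s * ∑_r ‖M r‖_{S(p)}`,
and the supremum is attained. -/
theorem mixed_schatten_duality
    {G : Type*} [AddCommGroup G] [Fintype G]
    (M : G → Matrix (Fin 2) (Fin 2) ℝ) (hM : ∀ r, (M r).IsHermitian)
    (αs p q : ℝ) (hαs : 0 < αs) (hp : 1 < p) (hq : 1 < q) (hpq : 1 / p + 1 / q = 1) :
    IsGreatest
      {x : ℝ | ∃ (N : G → Matrix (Fin 2) (Fin 2) ℝ) (hN : ∀ r, (N r).IsHermitian),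
        (∀ r, (|(hN r).eigenvalues 0| ^ q + |(hN r).eigenvalues 1| ^ q) ^ (1 / q) ≤ αs) ∧
        x = ∑ r : G, (N r * M r).trace}
      (αs * ∑ r : G, (|(hM r).eigenvalues 0| ^ p + |(hM r).eigenvalues 1| ^ p) ^ (1 / p)) := by
  have hpq' : Real.HolderConjugate p q := Real.holderConjugate_iff.mpr ⟨hp, by simpa [one_div] using hpq⟩
  constructor
  · -- membership: the optimal N attains the value
    choose N hN hcon htr using fun r => exists_opt hpq' hαs (hM r)
    refine ⟨N, hN, hcon, ?_⟩
    rw [Finset.mul_sum]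
    exact (Finset.sum_congr rfl fun r _ => htr r).symm
  · -- upper bound
    rintro x ⟨N, hN, hcon, rfl⟩
    rw [Finset.mul_sum]
    apply Finset.sum_le_sum
    intro r _
    have h1 : (N r * M r).trace = (M r * N r).trace := Matrix.trace_mul_comm _ _
    have h2 := trace_mul_le hpq' (hM r) (hN r)
    have hcM : 0 ≤ (|(hM r).eigenvalues 0| ^ p + |(hM r).eigenvalues 1| ^ p) ^ (1/p) :=
      Real.rpow_nonneg (by positivity) _
    calc (N r * M r).trace
        ≤ (|(hM r).eigenvalues 0| ^ p + |(hM r).eigenvalues 1| ^ p) ^ (1/p) *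
          (|(hN r).eigenvalues 0| ^ q + |(hN r).eigenvalues 1| ^ q) ^ (1/q) := by
          rw [h1]; exact h2
      _ ≤ (|(hM r).eigenvalues 0| ^ p + |(hM r).eigenvalues 1| ^ p) ^ (1/p) * αs :=
          mul_le_mul_of_nonneg_left (hcon r) hcM
      _ = αs * (|(hM r).eigenvalues 0| ^ p + |(hM r).eigenvalues 1| ^ p) ^ (1/p) :=
          mul_comm _ _
end
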